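/- MGDM has approximation ratio at most 3 for the maximum total group cost objective: for any profile r, mtgc(y, r) <= 3 * mtgc(y*, r), where y is the median of a largest group and y* is any point minimizing mtgc. -/

import Mathlib

open Finset

variable {n m : ℕ}

/-- Members of group `j`. -/
def grp (g : Fin n → Fin m) (j : Fin m) : Finset (Fin n) :=
  Finset.univ.filter (fun i => g i = j)

/-- Maximum total group cost. -/
noncomputable def mtgc (x : Fin n → ℝ) (g : Fin n → Fin m) (y : ℝ) : ℝ :=
  ⨆ j : Fin m, ∑ i ∈ grp g j, |y - x i|

/-- Maximum average group cost. -/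
noncomputable def magc (x : Fin n → ℝ) (g : Fin n → Fin m) (y : ℝ) : ℝ :=
  ⨆ j : Fin m, (∑ i ∈ grp g j, |y - x i|) / (grp g j).card

/-- Left median of a multiset of reals (`⌈k/2⌉`-th smallest). -/
noncomputable def medianOf (s : Multiset ℝ) : ℝ :=
  (s.sort (· ≤ ·)).getD ((Multiset.card s - 1) / 2) 0

/-- Left median of the locations of the members of group `j`. -/
noncomputable def groupMedian (x : Fin n → ℝ) (g : Fin n → Fin m) (j : Fin m) : ℝ :=
  medianOf ((grp g j).val.map x)

/-- A largest group, ties broken by the smallest index. -/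
noncomputable def majGroup (g : Fin n → Fin m) [NeZero m] : Fin m :=
  (Finset.univ.filter
    (fun j => ∀ k : Fin m, (grp g k).card ≤ (grp g j).card)).min' (by
      obtain ⟨b, -, hb⟩ :=
        Finset.exists_max_image Finset.univ (fun j => (grp g j).card) Finset.univ_nonempty
      exact ⟨b, Finset.mem_filter.mpr ⟨Finset.mem_univ _, fun k => hb k (Finset.mem_univ k)⟩⟩)

/-- Majority Group Deterministic Mechanism. -/
noncomputable def MGDM (x : Fin n → ℝ) (g : Fin n → Fin m) [NeZero m] : ℝ :=
  groupMedian x g (majGroup g)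

noncomputable def avgc (x : Fin n → ℝ) (g : Fin n → Fin m) (j : Fin m) (y : ℝ) : ℝ :=
  (∑ i ∈ grp g j, |y - x i|) / (grp g j).card

noncomputable def maxc (x : Fin n → ℝ) (g : Fin n → Fin m) (j : Fin m) (y : ℝ) : ℝ :=
  sSup ((fun i => |y - x i|) '' {i | g i = j})

noncomputable def minc (x : Fin n → ℝ) (g : Fin n → Fin m) (j : Fin m) (y : ℝ) : ℝ :=
  sInf ((fun i => |y - x i|) '' {i | g i = j})

noncomputable def IIF1 (x : Fin n → ℝ) (g : Fin n → Fin m) (y : ℝ) : ℝ :=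
  (⨆ j : Fin m, avgc x g j y) + ⨆ j : Fin m, (maxc x g j y - minc x g j y)
/-- MGDM has approximation ratio at most 3 for the maximum total group cost. -/

private lemma list_mul_le_sum (L : List ℝ) (c : ℝ) (h : ∀ a ∈ L, c ≤ a) :
    (L.length : ℝ) * c ≤ L.sum := by
  induction L with
  | nil => simp
  | cons a t ih =>
    have h1 := ih (fun b hb => h b (List.mem_cons_of_mem a hb))
    have h2 := h a (List.mem_cons_self)
    simp only [List.length_cons, List.sum_cons, Nat.cast_succ]
    nlinarith [h1, h2]

private lemma sublist_sum_bound (l l' : List ℝ) (hsub : l'.Sublist l) (f : ℝ → ℝ)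
    (hf : ∀ a, 0 ≤ f a) (d : ℝ) (h : ∀ a ∈ l', d ≤ f a) :
    (l'.length : ℝ) * d ≤ (l.map f).sum := by
  have h1 : ((l'.map f).length : ℝ) * d ≤ (l'.map f).sum := by
    apply list_mul_le_sum
    intro a ha
    obtain ⟨b, hb, rfl⟩ := List.mem_map.1 ha
    exact h b hb
  have h2 : (l'.map f).sum ≤ (l.map f).sum := by
    apply List.Sublist.sum_le_sum (hsub.map f)
    intro a ha
    obtain ⟨b, _, rfl⟩ := List.mem_map.1 ha
    exact hf b
  simpa using h1.trans h2

private lemma median_sum_bound (s : Multiset ℝ) (hs : s ≠ 0) (z : ℝ) :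
    (Multiset.card s : ℝ) * |medianOf s - z| ≤ 2 * ((s.map fun t => |z - t|).sum) := by
  set l := s.sort (· ≤ ·) with hl
  have hsort : l.Pairwise (· ≤ ·) := Multiset.pairwise_sort s _
  have hlen : l.length = Multiset.card s := Multiset.length_sort _
  have hk : 0 < l.length := by
    rw [hlen]; exact Multiset.card_pos.2 hs
  set k := l.length with hkdef
  set idx := (k - 1) / 2 with hidx
  have hidxk : idx < k := by omega
  have hy : medianOf s = l[idx] := by
    have hidx' : (Multiset.card s - 1) / 2 = idx := by rw [← hlen]
    rw [medianOf, ← hl, hidx', List.getD_eq_getElem l 0 hidxk]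
  set y := l[idx] with hydef
  have hmap : (s.map fun t => |z - t|).sum = (l.map fun t => |z - t|).sum := by
    conv_lhs => rw [← Multiset.sort_eq s (· ≤ ·), ← hl, Multiset.map_coe, Multiset.sum_coe]
  rw [hy, hmap, ← hlen]
  have hfnn : ∀ a : ℝ, 0 ≤ |z - a| := fun a => abs_nonneg _
  rcases le_total z y with hc | hc
  · -- use the agents at or above the median
    have hd : |y - z| = y - z := abs_of_nonneg (by linarith)
    have hge : ∀ a ∈ l.drop idx, y ≤ a := by
      have hcons : l.drop idx = y :: l.drop (idx + 1) := (List.getElem_cons_drop (as := l) (i := idx) hidxk).symm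
      have hdsort : (l.drop idx).Pairwise (· ≤ ·) := hsort.sublist (List.drop_sublist idx l)
      rw [hcons] at hdsort
      intro a ha
      rw [hcons, List.mem_cons] at ha
      rcases ha with rfl | ha
      · exact le_refl _
      · exact List.rel_of_pairwise_cons hdsort ha
    have hbound : (((l.drop idx).length : ℕ) : ℝ) * |y - z| ≤ (l.map fun t => |z - t|).sum := by
      apply sublist_sum_bound l (l.drop idx) (List.drop_sublist idx l) _ hfnn
      intro a ha
      have h1 := hge a ha
      rw [hd, abs_sub_comm, abs_of_nonneg (by linarith : (0:ℝ) ≤ a - z)]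
      linarith
    have hlendrop : (l.drop idx).length = k - idx := List.length_drop
    rw [hlendrop] at hbound
    have hcast : (k : ℝ) ≤ 2 * ((k - idx : ℕ) : ℝ) := by
      have : k ≤ 2 * (k - idx) := by omega
      exact_mod_cast this
    nlinarith [abs_nonneg (y - z), hbound, hcast]
  · -- use the agents at or below the median
    have hd : |y - z| = z - y := by rw [abs_sub_comm]; exact abs_of_nonneg (by linarith)
    have hle : ∀ a ∈ l.take (idx + 1), a ≤ y := by
      intro a ha
      obtain ⟨i, hm, rfl⟩ := List.mem_take_iff_getElem.1 ha
      have hik : i < k := lt_of_lt_of_le hm (min_le_right _ _)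
      have hii : i ≤ idx := by
        have := lt_of_lt_of_le hm (min_le_left _ _); omega
      exact hsort.rel_get_of_le (a := ⟨i, hik⟩) (b := ⟨idx, hidxk⟩) hii
    have hbound : (((l.take (idx + 1)).length : ℕ) : ℝ) * |y - z| ≤ (l.map fun t => |z - t|).sum := by
      apply sublist_sum_bound l (l.take (idx + 1)) (List.take_sublist _ l) _ hfnn
      intro a ha
      have h1 := hle a ha
      rw [hd, abs_of_nonneg (by linarith : (0:ℝ) ≤ z - a)]
      linarith
    have hlentake : (l.take (idx + 1)).length = idx + 1 := by
      rw [List.length_take]; omega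
    rw [hlentake] at hbound
    have hcast : (k : ℝ) ≤ 2 * ((idx + 1 : ℕ) : ℝ) := by
      have : k ≤ 2 * (idx + 1) := by omega
      exact_mod_cast this
    nlinarith [abs_nonneg (y - z), hbound, hcast]

theorem stmt4 [NeZero m] (x : Fin n → ℝ) (g : Fin n → Fin m) (ystar : ℝ)
    (hopt : ∀ z : ℝ, mtgc x g ystar ≤ mtgc x g z) :
    mtgc x g (MGDM x g) ≤ 3 * mtgc x g ystar := by
  classical
  set jg := majGroup g with hjg
  have hmaj : ∀ j : Fin m, (grp g j).card ≤ (grp g jg).card := by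
    have hmem := Finset.min'_mem (Finset.univ.filter
      (fun j => ∀ k : Fin m, (grp g k).card ≤ (grp g j).card)) (by
      obtain ⟨b, -, hb⟩ :=
        Finset.exists_max_image Finset.univ (fun j => (grp g j).card) Finset.univ_nonempty
      exact ⟨b, Finset.mem_filter.mpr ⟨Finset.mem_univ _, fun k => hb k (Finset.mem_univ k)⟩⟩)
    exact (Finset.mem_filter.1 hmem).2
  set y := MGDM x g with hymgdm
  set d := |y - ystar| with hd
  have hbdd : BddAbove (Set.range fun j : Fin m => ∑ i ∈ grp g j, |ystar - x i|) :=
    Set.Finite.bddAbove (Set.finite_range _)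
  have hstar : ∀ j : Fin m, ∑ i ∈ grp g j, |ystar - x i| ≤ mtgc x g ystar :=
    fun j => le_ciSup hbdd j
  have hstar_nn : 0 ≤ mtgc x g ystar := by
    refine le_trans ?_ (hstar (Classical.arbitrary (Fin m)))
    exact Finset.sum_nonneg fun i _ => abs_nonneg _
  set sg : Multiset ℝ := (grp g jg).val.map x with hsg
  by_cases hk0 : (grp g jg).card = 0
  · -- all groups empty
    have hempty : ∀ j : Fin m, grp g j = ∅ := by
      intro j
      have := hmaj j
      rw [hk0] at this
      exact Finset.card_eq_zero.1 (Nat.le_zero.1 this)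
    have : mtgc x g y = 0 := by
      rw [mtgc]
      have : ∀ j : Fin m, ∑ i ∈ grp g j, |y - x i| = 0 := by
        intro j; rw [hempty j]; simp
      simp only [this, ciSup_const]
    rw [this]
    linarith
  · have hsne : sg ≠ 0 := by
      intro h
      apply hk0
      have := congrArg Multiset.card h
      rw [hsg, Multiset.card_map] at this
      exact this
    have hymed : y = medianOf sg := rfl
    -- key bound: |G_g| * d ≤ 2 * mtgc ystar
    have hkd : ((grp g jg).card : ℝ) * d ≤ 2 * mtgc x g ystar := by
      have h1 := median_sum_bound sg hsne ystar
      rw [← hymed] at h1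
      have h2 : (sg.map fun t => |ystar - t|).sum = ∑ i ∈ grp g jg, |ystar - x i| := by
        rw [hsg, Multiset.map_map]
        rfl
      have h3 : (Multiset.card sg : ℝ) = ((grp g jg).card : ℝ) := by
        rw [hsg, Multiset.card_map]; rfl
      rw [h2, h3] at h1
      have h4 := hstar jg
      linarith
    -- per-group bound
    rw [mtgc]
    apply ciSup_le
    intro j
    have hlip : ∑ i ∈ grp g j, |y - x i| ≤
        (∑ i ∈ grp g j, |ystar - x i|) + ((grp g j).card : ℝ) * d := by
      calc ∑ i ∈ grp g j, |y - x i| ≤ ∑ i ∈ grp g j, (|ystar - x i| + d) := by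
            apply Finset.sum_le_sum
            intro i _
            calc |y - x i| ≤ |y - ystar| + |ystar - x i| := abs_sub_le y ystar (x i)
              _ = |ystar - x i| + d := by rw [hd]; ring
        _ = (∑ i ∈ grp g j, |ystar - x i|) + ((grp g j).card : ℝ) * d := by
            rw [Finset.sum_add_distrib, Finset.sum_const, nsmul_eq_mul]
    have hcard : ((grp g j).card : ℝ) * d ≤ ((grp g jg).card : ℝ) * d := by
      apply mul_le_mul_of_nonneg_right _ (abs_nonneg _)
      exact_mod_cast hmaj j
    have := hstar j
    linarith
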